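/- Let G = ⟨σ, τ⟩ ≅ D_{4n} act on M = (⨁_{i=1}^{2n} ℤ·x_i) ⊕ ℤ·y₁ ⊕ ℤ·y₂ by σ : x₁ ↦ x₂ ↦ ⋯ ↦ x_{2n} ↦ −x₁, y₁ ↦ y₂ + x₁, y₂ ↦ y₁ + x₁, and τ : x_i ↦ −x_{2n+1−i}, y₁ ↦ −y₂, y₂ ↦ −y₁. Then M^{⟨σ⟩} = ℤ·w where w = y₁ + y₂ + Σ_{i=1}^{2n} x_i, and τ·w = −w. -/

import Mathlib

section DihedralAux

variable {n : ℕ} {M : Type} [AddCommGroup M] [Module ℤ M]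

private lemma dihedral_aux_g (b : Module.Basis (Fin (2 * n + 2)) ℤ M) :
    ∃ g : ℕ → M, ∀ (k : ℕ) (h : k < 2 * n + 2), g k = b ⟨k, h⟩ :=
  ⟨fun k => if h : k < 2 * n + 2 then b ⟨k, h⟩ else 0, fun k h => dif_pos h⟩

set_option maxHeartbeats 1000000 in
private lemma dihedral_aux_sigma_w (hn : 0 < n) (b : Module.Basis (Fin (2 * n + 2)) ℤ M)
    (f : M →ₗ[ℤ] M)
    (hfb : ∀ i : Fin (2 * n + 2), f (b i) =
      if h : (i : ℕ) + 1 < 2 * n then b ⟨(i : ℕ) + 1, by omega⟩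
      else if (i : ℕ) = 2 * n - 1 then - b ⟨0, by omega⟩
      else if (i : ℕ) = 2 * n then b ⟨2 * n + 1, by omega⟩ + b ⟨0, by omega⟩
      else b ⟨2 * n, by omega⟩ + b ⟨0, by omega⟩) :
    f (b ⟨2 * n, by omega⟩ + b ⟨2 * n + 1, by omega⟩ +
        ∑ i : Fin (2 * n), b (Fin.castLE (by omega) i)) =
      b ⟨2 * n, by omega⟩ + b ⟨2 * n + 1, by omega⟩ +
        ∑ i : Fin (2 * n), b (Fin.castLE (by omega) i) := by
  obtain ⟨g, hg⟩ := dihedral_aux_g b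
  have hS : ∑ i : Fin (2 * n), b (Fin.castLE (by omega) i) =
      ∑ k ∈ Finset.range (2 * n), g k := by
    rw [Finset.sum_range]
    refine Finset.sum_congr rfl fun i _ => ?_
    rw [hg i (by omega)]
    exact congrArg b (Fin.ext (by simp))
  obtain ⟨m', hm'⟩ : ∃ m', 2 * n = m' + 1 := ⟨2 * n - 1, by omega⟩
  have key1 : ∀ k ∈ Finset.range (2 * n), f (g k) =
      if k + 1 < 2 * n then g (k + 1) else -(g 0) := by
    intro k hk
    rw [Finset.mem_range] at hk
    rw [hg k (by omega), hfb]
    by_cases h : k + 1 < 2 * n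
    · rw [dif_pos (by simpa using h), if_pos h, hg (k + 1) (by omega)]
    · rw [dif_neg (by simpa using h), if_neg h,
        if_pos (by simp only [Fin.val_mk]; omega), hg 0 (by omega)]
  rw [hS, map_add, map_add, map_sum, Finset.sum_congr rfl key1]
  have hc1 : ¬(2 * n + 1 < 2 * n) := by omega
  have hc2 : ¬(2 * n = 2 * n - 1) := by omega
  have hc3 : ¬(2 * n + 1 + 1 < 2 * n) := by omega
  have hc4 : ¬(2 * n + 1 = 2 * n - 1) := by omega
  have hc5 : ¬(2 * n + 1 = 2 * n) := by omega
  have t1 : f (b ⟨2 * n, by omega⟩) = b ⟨2 * n + 1, by omega⟩ + b ⟨0, by omega⟩ := by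
    rw [hfb]
    simp only [Fin.val_mk, hc1, hc2, dif_neg, if_false, if_true, eq_self_iff_true,
      not_false_eq_true]
  have t2 : f (b ⟨2 * n + 1, by omega⟩) = b ⟨2 * n, by omega⟩ + b ⟨0, by omega⟩ := by
    rw [hfb]
    simp only [Fin.val_mk, hc3, hc4, hc5, dif_neg, if_false, not_false_eq_true]
  rw [t1, t2]
  have e1 : ∑ k ∈ Finset.range (2 * n), (if k + 1 < 2 * n then g (k + 1) else -(g 0)) =
      (∑ k ∈ Finset.range m', g (k + 1)) - g 0 := by
    rw [hm', Finset.sum_range_succ, if_neg (by omega)]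
    rw [Finset.sum_congr rfl (fun k hk => if_pos (by rw [Finset.mem_range] at hk; omega))]
    abel
  have e2 : ∑ k ∈ Finset.range (2 * n), g k
      = (∑ k ∈ Finset.range m', g (k + 1)) + g 0 := by
    rw [hm', Finset.sum_range_succ']
  rw [e1, e2, ← hg 0 (by omega)]
  abel

set_option maxHeartbeats 1000000 in
private lemma dihedral_aux_entry (hn : 0 < n) (b : Module.Basis (Fin (2 * n + 2)) ℤ M)
    (f : M →ₗ[ℤ] M)
    (hfb : ∀ i : Fin (2 * n + 2), f (b i) =
      if h : (i : ℕ) + 1 < 2 * n then b ⟨(i : ℕ) + 1, by omega⟩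
      else if (i : ℕ) = 2 * n - 1 then - b ⟨0, by omega⟩
      else if (i : ℕ) = 2 * n then b ⟨2 * n + 1, by omega⟩ + b ⟨0, by omega⟩
      else b ⟨2 * n, by omega⟩ + b ⟨0, by omega⟩)
    (i j : Fin (2 * n + 2)) :
    (b.repr (f (b i))) j =
      (if (i : ℕ) + 1 < 2 * n ∧ (i : ℕ) + 1 = (j : ℕ) then 1 else 0)
      + (if (i : ℕ) = 2 * n - 1 ∧ (j : ℕ) = 0 then -1 else 0)
      + (if (i : ℕ) = 2 * n ∧ ((j : ℕ) = 2 * n + 1 ∨ (j : ℕ) = 0) then 1 else 0)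
      + (if (i : ℕ) = 2 * n + 1 ∧ ((j : ℕ) = 2 * n ∨ (j : ℕ) = 0) then 1 else 0) := by
  rw [hfb i]
  by_cases h1 : (i : ℕ) + 1 < 2 * n
  · rw [dif_pos h1, Module.Basis.repr_self, Finsupp.single_apply]
    simp only [Fin.ext_iff, Fin.val_mk]
    split_ifs <;> first | ring1 | (exfalso; omega) | (exfalso; simp_all only [false_and, and_false, or_false, false_or, true_and, and_true, true_or, or_true]; omega) | (exfalso; simp_all) | (exfalso; simp_all only [false_and, and_false, or_false, false_or, true_and, and_true, true_or, or_true]; omega) | (exfalso; simp_all)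
  · rw [dif_neg h1]
    by_cases h2 : (i : ℕ) = 2 * n - 1
    · rw [if_pos h2, map_neg, Finsupp.neg_apply, Module.Basis.repr_self, Finsupp.single_apply]
      simp only [Fin.ext_iff, Fin.val_mk]
      split_ifs <;> first | ring1 | (exfalso; omega) | (exfalso; simp_all only [false_and, and_false, or_false, false_or, true_and, and_true, true_or, or_true]; omega) | (exfalso; simp_all) | (exfalso; simp_all only [false_and, and_false, or_false, false_or, true_and, and_true, true_or, or_true]; omega) | (exfalso; simp_all)
    · by_cases h3 : (i : ℕ) = 2 * n
      · rw [if_neg h2, if_pos h3, map_add, Finsupp.add_apply, Module.Basis.repr_self,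
          Module.Basis.repr_self, Finsupp.single_apply, Finsupp.single_apply]
        simp only [Fin.ext_iff, Fin.val_mk]
        split_ifs <;> first | ring1 | (exfalso; omega) | (exfalso; simp_all only [false_and, and_false, or_false, false_or, true_and, and_true, true_or, or_true]; omega) | (exfalso; simp_all) | (exfalso; simp_all only [false_and, and_false, or_false, false_or, true_and, and_true, true_or, or_true]; omega) | (exfalso; simp_all)
      · have h4 : (i : ℕ) = 2 * n + 1 := by omega
        rw [if_neg h2, if_neg h3, map_add, Finsupp.add_apply, Module.Basis.repr_self,
          Module.Basis.repr_self, Finsupp.single_apply, Finsupp.single_apply]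
        simp only [Fin.ext_iff, Fin.val_mk]
        split_ifs <;> first | ring1 | (exfalso; omega) | (exfalso; simp_all only [false_and, and_false, or_false, false_or, true_and, and_true, true_or, or_true]; omega) | (exfalso; simp_all) | (exfalso; simp_all only [false_and, and_false, or_false, false_or, true_and, and_true, true_or, or_true]; omega) | (exfalso; simp_all)

set_option maxHeartbeats 16000000 in
private lemma dihedral_aux_fix (hn : 0 < n) (b : Module.Basis (Fin (2 * n + 2)) ℤ M)
    (f : M →ₗ[ℤ] M)
    (hfb : ∀ i : Fin (2 * n + 2), f (b i) =
      if h : (i : ℕ) + 1 < 2 * n then b ⟨(i : ℕ) + 1, by omega⟩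
      else if (i : ℕ) = 2 * n - 1 then - b ⟨0, by omega⟩
      else if (i : ℕ) = 2 * n then b ⟨2 * n + 1, by omega⟩ + b ⟨0, by omega⟩
      else b ⟨2 * n, by omega⟩ + b ⟨0, by omega⟩)
    (m : M) (hfix : f m = m) :
    ∃ a : ℤ, m = a • (b ⟨2 * n, by omega⟩ + b ⟨2 * n + 1, by omega⟩ +
      ∑ i : Fin (2 * n), b (Fin.castLE (by omega) i)) := by
  have hkey : ∀ j : Fin (2 * n + 2), (b.repr m) j =
      ∑ i : Fin (2 * n + 2), (b.repr m) i *
        ((if (i : ℕ) + 1 < 2 * n ∧ (i : ℕ) + 1 = (j : ℕ) then 1 else 0)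
        + (if (i : ℕ) = 2 * n - 1 ∧ (j : ℕ) = 0 then -1 else 0)
        + (if (i : ℕ) = 2 * n ∧ ((j : ℕ) = 2 * n + 1 ∨ (j : ℕ) = 0) then 1 else 0)
        + (if (i : ℕ) = 2 * n + 1 ∧ ((j : ℕ) = 2 * n ∨ (j : ℕ) = 0) then 1 else 0)) := by
    intro j
    conv_lhs => rw [← hfix]
    conv_lhs => rw [← Module.Basis.sum_repr b m]
    rw [map_sum, map_sum, Finsupp.finset_sum_apply]
    refine Finset.sum_congr rfl fun i _ => ?_
    rw [← dihedral_aux_entry hn b f hfb i j]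
    simp
  have hE1 : ∀ (j : ℕ) (hj : j + 1 < 2 * n),
      (b.repr m) ⟨j + 1, by omega⟩ = (b.repr m) ⟨j, by omega⟩ := by
    intro j hj
    rw [hkey ⟨j + 1, by omega⟩,
      Fintype.sum_eq_single (⟨j, by omega⟩ : Fin (2 * n + 2)) ?_]
    · simp only [Fin.val_mk, and_true, true_and, and_false, false_and, or_false, false_or, or_true, true_or]
      split_ifs <;> first | ring1 | (exfalso; omega) | (exfalso; simp_all only [false_and, and_false, or_false, false_or, true_and, and_true, true_or, or_true]; omega) | (exfalso; simp_all) | (exfalso; simp_all only [false_and, and_false, or_false, false_or, true_and, and_true, true_or, or_true]; omega) | (exfalso; simp_all)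
    · intro i hi
      simp only [ne_eq, Fin.ext_iff, Fin.val_mk] at hi
      simp only [Fin.val_mk, and_true, true_and, and_false, false_and, or_false, false_or, or_true, true_or]
      split_ifs <;> first | ring1 | (exfalso; omega) | (exfalso; simp_all only [false_and, and_false, or_false, false_or, true_and, and_true, true_or, or_true]; omega) | (exfalso; simp_all) | (exfalso; simp_all only [false_and, and_false, or_false, false_or, true_and, and_true, true_or, or_true]; omega) | (exfalso; simp_all)
  have hchain : ∀ (j : ℕ) (hj : j < 2 * n),
      (b.repr m) ⟨j, by omega⟩ = (b.repr m) ⟨0, by omega⟩ := by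
    intro j
    induction j with
    | zero => intro _; rfl
    | succ k ih => intro hj; rw [hE1 k hj, ih (by omega)]
  have hE2 : (b.repr m) ⟨2 * n, by omega⟩ = (b.repr m) ⟨2 * n + 1, by omega⟩ := by
    rw [hkey ⟨2 * n, by omega⟩,
      Fintype.sum_eq_single (⟨2 * n + 1, by omega⟩ : Fin (2 * n + 2)) ?_]
    · simp only [Fin.val_mk, and_true, true_and, and_false, false_and, or_false, false_or, or_true, true_or]
      split_ifs <;> first | ring1 | (exfalso; omega) | (exfalso; simp_all only [false_and, and_false, or_false, false_or, true_and, and_true, true_or, or_true]; omega) | (exfalso; simp_all) | (exfalso; simp_all only [false_and, and_false, or_false, false_or, true_and, and_true, true_or, or_true]; omega) | (exfalso; simp_all)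
    · intro i hi
      simp only [ne_eq, Fin.ext_iff, Fin.val_mk] at hi
      simp only [Fin.val_mk, and_true, true_and, and_false, false_and, or_false, false_or, or_true, true_or]
      split_ifs <;> first | ring1 | (exfalso; omega) | (exfalso; simp_all only [false_and, and_false, or_false, false_or, true_and, and_true, true_or, or_true]; omega) | (exfalso; simp_all) | (exfalso; simp_all only [false_and, and_false, or_false, false_or, true_and, and_true, true_or, or_true]; omega) | (exfalso; simp_all)
  have hE0 : (b.repr m) ⟨0, by omega⟩ =
      -((b.repr m) ⟨2 * n - 1, by omega⟩) + (b.repr m) ⟨2 * n, by omega⟩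
        + (b.repr m) ⟨2 * n + 1, by omega⟩ := by
    have hptw : ∀ i : Fin (2 * n + 2),
        (b.repr m) i *
          ((if (i : ℕ) + 1 < 2 * n ∧ (i : ℕ) + 1 = ((⟨0, by omega⟩ : Fin (2 * n + 2)) : ℕ) then 1 else 0)
          + (if (i : ℕ) = 2 * n - 1 ∧ ((⟨0, by omega⟩ : Fin (2 * n + 2)) : ℕ) = 0 then -1 else 0)
          + (if (i : ℕ) = 2 * n ∧ (((⟨0, by omega⟩ : Fin (2 * n + 2)) : ℕ) = 2 * n + 1 ∨ ((⟨0, by omega⟩ : Fin (2 * n + 2)) : ℕ) = 0) then 1 else 0)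
          + (if (i : ℕ) = 2 * n + 1 ∧ (((⟨0, by omega⟩ : Fin (2 * n + 2)) : ℕ) = 2 * n ∨ ((⟨0, by omega⟩ : Fin (2 * n + 2)) : ℕ) = 0) then 1 else 0)) =
        (if i = (⟨2 * n - 1, by omega⟩ : Fin (2 * n + 2)) then -((b.repr m) i) else 0)
        + (if i = (⟨2 * n, by omega⟩ : Fin (2 * n + 2)) then (b.repr m) i else 0)
        + (if i = (⟨2 * n + 1, by omega⟩ : Fin (2 * n + 2)) then (b.repr m) i else 0) := by
      intro i
      simp only [Fin.ext_iff, Fin.val_mk, and_true, true_and, and_false, false_and, or_false, false_or, or_true, true_or]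
      split_ifs <;> first | ring1 | (exfalso; omega) | (exfalso; tauto) | (exfalso; simp_all only [false_and, and_false, or_false, false_or, true_and, and_true, true_or, or_true]; omega) | (exfalso; simp_all)
    rw [hkey ⟨0, by omega⟩, Finset.sum_congr rfl (fun i _ => hptw i),
      Finset.sum_add_distrib, Finset.sum_add_distrib,
      Finset.sum_ite_eq' Finset.univ, Finset.sum_ite_eq' Finset.univ,
      Finset.sum_ite_eq' Finset.univ]
    simp
  clear hkey hfb hfix f
  have h2n1 : (b.repr m) ⟨2 * n - 1, by omega⟩ = (b.repr m) ⟨0, by omega⟩ :=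
    hchain (2 * n - 1) (by omega)
  have hlast : (b.repr m) ⟨2 * n, by omega⟩ = (b.repr m) ⟨0, by omega⟩ := by
    rw [h2n1] at hE0; rw [hE2] at hE0 ⊢; omega
  have hall : ∀ j : Fin (2 * n + 2), (b.repr m) j = (b.repr m) ⟨0, by omega⟩ := by
    intro j
    by_cases hj : (j : ℕ) < 2 * n
    · rw [show j = (⟨(j : ℕ), by omega⟩ : Fin (2 * n + 2)) from Fin.ext rfl]
      exact hchain (j : ℕ) hj
    · by_cases hj2 : (j : ℕ) = 2 * n
      · rw [show j = (⟨2 * n, by omega⟩ : Fin (2 * n + 2)) from Fin.ext hj2]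
        exact hlast
      · rw [show j = (⟨2 * n + 1, by omega⟩ : Fin (2 * n + 2)) from
          Fin.ext (by simp only [Fin.val_mk]; have := j.isLt; omega)]
        rw [← hE2]; exact hlast
  clear hE1 hE2 hE0 hchain h2n1 hlast
  refine ⟨(b.repr m) ⟨0, by omega⟩, ?_⟩
  obtain ⟨g, hg⟩ := dihedral_aux_g b
  have hS : ∑ i : Fin (2 * n), b (Fin.castLE (by omega) i) =
      ∑ k ∈ Finset.range (2 * n), g k := by
    rw [Finset.sum_range]
    refine Finset.sum_congr rfl fun i _ => ?_
    rw [hg i (by omega)]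
    exact congrArg b (Fin.ext (by simp))
  have hw : b ⟨2 * n, by omega⟩ + b ⟨2 * n + 1, by omega⟩ +
      ∑ i : Fin (2 * n), b (Fin.castLE (by omega) i) =
      ∑ i : Fin (2 * n + 2), b i := by
    rw [hS]
    have h8 : ∑ i : Fin (2 * n + 2), b i = ∑ k ∈ Finset.range (2 * n + 2), g k := by
      rw [Finset.sum_range]
      exact Finset.sum_congr rfl fun i _ => by rw [hg i (by omega)]
    rw [h8]
    conv_rhs => rw [show 2 * n + 2 = (2 * n + 1) + 1 from by omega]
    rw [Finset.sum_range_succ, Finset.sum_range_succ,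
      ← hg (2 * n) (by omega), ← hg (2 * n + 1) (by omega)]
    abel
  rw [← Int.cast_smul_eq_zsmul ℤ, Int.cast_id, hw, Finset.smul_sum]
  conv_lhs => rw [← Module.Basis.sum_repr b m]
  exact Finset.sum_congr rfl fun i _ => by rw [hall i]

set_option maxHeartbeats 1000000 in
private lemma dihedral_aux_tau_w (hn : 0 < n) (b : Module.Basis (Fin (2 * n + 2)) ℤ M)
    (f : M →ₗ[ℤ] M)
    (hfb : ∀ i : Fin (2 * n + 2), f (b i) =
      if (i : ℕ) < 2 * n then - b ⟨2 * n - 1 - (i : ℕ), by omega⟩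
      else if (i : ℕ) = 2 * n then - b ⟨2 * n + 1, by omega⟩
      else - b ⟨2 * n, by omega⟩) :
    f (b ⟨2 * n, by omega⟩ + b ⟨2 * n + 1, by omega⟩ +
        ∑ i : Fin (2 * n), b (Fin.castLE (by omega) i)) =
      - (b ⟨2 * n, by omega⟩ + b ⟨2 * n + 1, by omega⟩ +
        ∑ i : Fin (2 * n), b (Fin.castLE (by omega) i)) := by
  obtain ⟨g, hg⟩ := dihedral_aux_g b
  have hS : ∑ i : Fin (2 * n), b (Fin.castLE (by omega) i) =
      ∑ k ∈ Finset.range (2 * n), g k := by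
    rw [Finset.sum_range]
    refine Finset.sum_congr rfl fun i _ => ?_
    rw [hg i (by omega)]
    exact congrArg b (Fin.ext (by simp))
  have key2 : ∀ k ∈ Finset.range (2 * n), f (g k) = -(g (2 * n - 1 - k)) := by
    intro k hk
    rw [Finset.mem_range] at hk
    rw [hg k (by omega), hfb, if_pos (by simpa using hk), hg (2 * n - 1 - k) (by omega)]
  have hc1 : ¬(2 * n < 2 * n) := by omega
  have hc2 : ¬(2 * n + 1 < 2 * n) := by omega
  have hc3 : ¬(2 * n + 1 = 2 * n) := by omega
  have t1 : f (b ⟨2 * n, by omega⟩) = - b ⟨2 * n + 1, by omega⟩ := by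
    rw [hfb]
    simp only [Fin.val_mk, hc1, if_false, if_true, eq_self_iff_true]
  have t2 : f (b ⟨2 * n + 1, by omega⟩) = - b ⟨2 * n, by omega⟩ := by
    rw [hfb]
    simp only [Fin.val_mk, hc2, hc3, if_false]
  rw [hS, map_add, map_add, map_sum, Finset.sum_congr rfl key2, t1, t2]
  rw [Finset.sum_neg_distrib, Finset.sum_range_reflect]
  rw [← hg (2 * n) (by omega), ← hg (2 * n + 1) (by omega)]
  abel

end DihedralAux

/-- Let `G = ⟨σ, τ⟩ ≅ D_{4n}` (order `8n`) act on
`M = (⨁_{i=1}^{2n} ℤ·xᵢ) ⊕ ℤ·y₁ ⊕ ℤ·y₂` (basis `b 0, …, b (2n+1)`, where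
`xᵢ = b (i-1)`, `y₁ = b (2n)`, `y₂ = b (2n+1)`) by
`σ : x₁ ↦ ⋯ ↦ x_{2n} ↦ -x₁, y₁ ↦ y₂ + x₁, y₂ ↦ y₁ + x₁` and
`τ : xᵢ ↦ -x_{2n+1-i}, y₁ ↦ -y₂, y₂ ↦ -y₁`.  Then the `σ`-fixed sublattice of `M` is
`ℤ·w` with `w = y₁ + y₂ + ∑ᵢ xᵢ`, and `τ·w = -w`. -/
theorem dihedral_big_lattice_sigma_invariants
    (n : ℕ) (hn : 0 < n) {G : Type} [Group G] (σ τ : G)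
    (hσ : σ ^ (4 * n) = 1) (hτ : τ ^ 2 = 1) (hrel : τ⁻¹ * σ * τ = σ⁻¹)
    (hgen : Subgroup.closure {σ, τ} = ⊤) (hcard : Nat.card G = 8 * n)
    {M : Type} [AddCommGroup M] [Module ℤ M] (b : Module.Basis (Fin (2 * n + 2)) ℤ M)
    (ρ : Representation ℤ G M)
    (hρσ : ∀ i : Fin (2 * n + 2), ρ σ (b i) =
      if h : (i : ℕ) + 1 < 2 * n then b ⟨(i : ℕ) + 1, by omega⟩
      else if (i : ℕ) = 2 * n - 1 then - b ⟨0, by omega⟩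
      else if (i : ℕ) = 2 * n then b ⟨2 * n + 1, by omega⟩ + b ⟨0, by omega⟩
      else b ⟨2 * n, by omega⟩ + b ⟨0, by omega⟩)
    (hρτ : ∀ i : Fin (2 * n + 2), ρ τ (b i) =
      if (i : ℕ) < 2 * n then - b ⟨2 * n - 1 - (i : ℕ), by omega⟩
      else if (i : ℕ) = 2 * n then - b ⟨2 * n + 1, by omega⟩
      else - b ⟨2 * n, by omega⟩) :
    (∀ m : M, ρ σ m = m ↔ ∃ a : ℤ, m = a •
      (b ⟨2 * n, by omega⟩ + b ⟨2 * n + 1, by omega⟩ +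
        ∑ i : Fin (2 * n), b (Fin.castLE (by omega) i))) ∧
    ρ τ (b ⟨2 * n, by omega⟩ + b ⟨2 * n + 1, by omega⟩ +
        ∑ i : Fin (2 * n), b (Fin.castLE (by omega) i)) =
      - (b ⟨2 * n, by omega⟩ + b ⟨2 * n + 1, by omega⟩ +
        ∑ i : Fin (2 * n), b (Fin.castLE (by omega) i)) := by
  constructor
  · intro m
    constructor
    · intro hfix
      exact dihedral_aux_fix hn b (ρ σ) hρσ m hfix
    · rintro ⟨a, rfl⟩
      rw [← Int.cast_smul_eq_zsmul ℤ, Int.cast_id, LinearMap.map_smul,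
        dihedral_aux_sigma_w hn b (ρ σ) hρσ]
  · exact dihedral_aux_tau_w hn b (ρ τ) hρτ
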